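/- Let G be a group and S(G) the inverse semigroup generated by symbols t_g (g ∈ G) with relations t_{g⁻¹} t_g t_h = t_{g⁻¹} t_{gh}, t_g t_h t_{h⁻¹} = t_{gh} t_{h⁻¹}, and t_g t_1 = t_g. Then in any quotient of S(G) in which additionally t_s* t_s = 1 for all s in a subsemigroup S with G = S⁻¹S, the images satisfy t̃_{s⁻¹p} = t̃_s* t̃_p and t̃_{sp} = t̃_s t̃_p for all s, p ∈ S. -/
import Mathlib


/-- Let `G` be a group, `S ⊆ G` a subsemigroup with `G = S⁻¹S`, and let
`t : G → P` satisfy Exel's relations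
`t_{g⁻¹} t_g t_h = t_{g⁻¹} t_{gh}`, `t_g t_h t_{h⁻¹} = t_{gh} t_{h⁻¹}`,
`t_g t_1 = t_g`, i.e. `t` factors through Exel's inverse semigroup `S(G)`.
In any quotient in which additionally `t_s* t_s = 1` for all `s ∈ S`, the
images satisfy `t_{s⁻¹p} = t_{s⁻¹} t_p` and `t_{sp} = t_s t_p` for
`s, p ∈ S`. -/
theorem stmt18 {G P : Type*} [Group G] [Monoid P]
    (S : Set G) (hSmul : ∀ a ∈ S, ∀ b ∈ S, a * b ∈ S)
    (hOre : ∀ g : G, ∃ s ∈ S, ∃ p ∈ S, g = s⁻¹ * p)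
    (t : G → P)
    (hR1 : ∀ g h : G, t g⁻¹ * t g * t h = t g⁻¹ * t (g * h))
    (hR2 : ∀ g h : G, t g * t h * t h⁻¹ = t (g * h) * t h⁻¹)
    (hR3 : ∀ g : G, t g * t 1 = t g)
    (ht1 : t 1 = 1)
    (hisom : ∀ s ∈ S, t s⁻¹ * t s = 1) :
    ∀ s ∈ S, ∀ p ∈ S,
      t (s⁻¹ * p) = t s⁻¹ * t p ∧ t (s * p) = t s * t p := by
  intro s hs p hp
  constructor
  · calc t (s⁻¹ * p) = (t s⁻¹ * t s) * t (s⁻¹ * p) := by rw [hisom s hs, one_mul]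
      _ = t s⁻¹ * t (s * (s⁻¹ * p)) := hR1 s (s⁻¹ * p)
      _ = t s⁻¹ * t p := by rw [mul_inv_cancel_left]
  · calc t (s * p) = t (s * p) * (t p⁻¹ * t p) := by rw [hisom p hp, mul_one]
      _ = (t (s * p) * t p⁻¹) * t p := by rw [mul_assoc]
      _ = (t s * t p * t p⁻¹) * t p := by rw [hR2 s p]
      _ = t s * t p * (t p⁻¹ * t p) := by rw [mul_assoc]
      _ = t s * t p := by rw [hisom p hp, mul_one]
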